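/- Let β, γ ∈ ℝ with β ≠ 0, and consider the complex cubic polynomial P(X) = X³ + 12γX − 4β². Then P has exactly one root with positive real part; this root is real and positive, and the other two roots (counted with multiplicity) have negative real part. -/

import Mathlib

open Polynomial

/-- The cubic polynomial `P(X) = X³ + 12γX − 4β²` with real parameters, over `ℂ`. -/
noncomputable def Ppoly (β γ : ℝ) : Polynomial ℂ :=
  Polynomial.X ^ 3 + Polynomial.C (12 * (γ : ℂ)) * Polynomial.X
    - Polynomial.C (4 * (β : ℂ) ^ 2)

theorem stmt_13 (β γ : ℝ) (hβ : β ≠ 0) :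
    ∃ r : ℝ, 0 < r ∧ (r : ℂ) ∈ (Ppoly β γ).roots ∧
      Multiset.count ((r : ℂ)) (Ppoly β γ).roots = 1 ∧
      Multiset.card (Ppoly β γ).roots = 3 ∧
      ∀ z ∈ (Ppoly β γ).roots, z ≠ (r : ℂ) → z.re < 0 := by
  have hβ2 : (0:ℝ) < β^2 := by positivity
  -- real root via IVT
  obtain ⟨r, hr0, hfr⟩ : ∃ r : ℝ, 0 < r ∧ r^3 + 12*γ*r - 4*β^2 = 0 := by
    set f : ℝ → ℝ := fun x => x^3 + 12*γ*x - 4*β^2 with hf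
    set M : ℝ := 12*|γ| + 4*β^2 + 1 with hM
    have hMpos : 0 < M := by positivity
    have h0 : f 0 < 0 := by simp only [hf]; norm_num; positivity
    have hMv : 0 < f M := by
      simp only [hf, hM]
      nlinarith [le_abs_self γ, neg_abs_le γ, abs_nonneg γ, sq_nonneg β, sq_nonneg (12*|γ| + 4*β^2)]
    have hc : ContinuousOn f (Set.Icc 0 M) := by fun_prop
    obtain ⟨r, hrI, hr⟩ := intermediate_value_Icc hMpos.le hc ⟨h0.le, hMv.le⟩
    refine ⟨r, ?_, hr⟩
    rcases lt_or_eq_of_le hrI.1 with h | h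
    · exact h
    · exfalso; rw [← h] at hr; exact absurd hr h0.ne
  set P := Ppoly β γ with hP
  have hdeg : P.natDegree = 3 := by unfold P; unfold Ppoly; compute_degree!
  have hmon : P.Monic := by unfold P; unfold Ppoly; monicity!
  have hPne : P ≠ 0 := hmon.ne_zero
  have hcard : Multiset.card P.roots = 3 := by
    rw [Polynomial.splits_iff_card_roots.mp (IsAlgClosed.splits P), hdeg]
  have hevalr : P.eval (r : ℂ) = 0 := by
    unfold P; unfold Ppoly
    simp only [eval_sub, eval_add, eval_pow, eval_mul, eval_C, eval_X]
    have : ((r:ℂ)^3 + 12*γ*r - 4*β^2) = ((r^3 + 12*γ*r - 4*β^2 : ℝ) : ℂ) := by push_cast; ring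
    rw [this, hfr]; simp
  have hrmem : (r : ℂ) ∈ P.roots := by
    rw [Polynomial.mem_roots hPne]; exact hevalr
  obtain ⟨t, ht⟩ := Multiset.exists_cons_of_mem hrmem
  have htcard : Multiset.card t = 2 := by
    have := hcard; rw [ht] at this; simpa using this
  obtain ⟨z, w, hzw⟩ := Multiset.card_eq_two.mp htcard
  have hroots : P.roots = (r:ℂ) ::ₘ z ::ₘ {w} := by rw [ht, hzw]; rfl
  -- factorization
  have hfac : P = (X - C (r:ℂ)) * (X - C z) * (X - C w) := by
    have h := Polynomial.prod_multiset_X_sub_C_of_monic_of_roots_card_eq hmon (hcard.trans hdeg.symm)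
    rw [hroots] at h
    simp only [Multiset.map_cons, Multiset.map_singleton, Multiset.prod_cons,
      Multiset.prod_singleton] at h
    rw [← h]; ring
  -- Vieta
  have hPeq : (X:ℂ[X])^3 + C (12*(γ:ℂ)) * X - C (4*(β:ℂ)^2)
      = X^3 - C ((r:ℂ)+z+w) * X^2 + C ((r:ℂ)*z+(r:ℂ)*w+z*w) * X - C ((r:ℂ)*z*w) := by
    rw [show ((X:ℂ[X])^3 - C ((r:ℂ)+z+w) * X^2 + C ((r:ℂ)*z+(r:ℂ)*w+z*w) * X - C ((r:ℂ)*z*w))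
        = (X - C (r:ℂ)) * (X - C z) * (X - C w) by simp only [C_add, C_mul]; ring]
    exact hfac
  have h2 := congrArg (fun p => Polynomial.coeff p 2) hPeq
  have h0 := congrArg (fun p => Polynomial.coeff p 0) hPeq
  simp only [coeff_add, coeff_sub, coeff_X_pow, coeff_C_mul, coeff_C, coeff_X] at h2 h0
  norm_num at h2 h0
  have hsum : (r:ℂ) + z + w = 0 := by linear_combination h2
  have hprod : (r:ℂ) * z * w = 4*(β:ℂ)^2 := by linear_combination -h0
  -- substitute w = -r - z
  have hw : w = -(r:ℂ) - z := by linear_combination hsum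
  set a := z.re with ha
  set b := z.im with hb
  have hwre : w.re = -r - a := by rw [hw]; simp [ha]
  have hwim : w.im = -b := by rw [hw]; simp [hb]
  have hprod' : (r:ℂ) * z * (-(r:ℂ) - z) = ((4*β^2 : ℝ) : ℂ) := by
    rw [← hw, hprod]; push_cast; ring
  have hre := congrArg Complex.re hprod'
  have him := congrArg Complex.im hprod'
  simp only [Complex.mul_re, Complex.mul_im, Complex.ofReal_re, Complex.ofReal_im,
    Complex.sub_re, Complex.sub_im, Complex.neg_re, Complex.neg_im, Complex.ofReal_re,
    ← ha, ← hb] at hre him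
  norm_num at hre him
  have him'' : r * (b * (r + 2*a)) = 0 := by linear_combination -him
  have him' : b * (r + 2*a) = 0 := by
    rcases mul_eq_zero.mp him'' with h | h
    · exact absurd h hr0.ne'
    · exact h
  have hzne : z ≠ (r:ℂ) := by
    intro h
    have ha' : a = r := by rw [ha, h]; simp
    have hb' : b = 0 := by rw [hb, h]; simp
    rw [ha', hb'] at hre
    nlinarith [hre, hr0, hβ2]
  have hwne : w ≠ (r:ℂ) := by
    intro h
    have ha' : -r - a = r := by rw [← hwre, h]; simp
    have hb' : b = 0 := by
      have := congrArg Complex.im h; rw [hwim] at this; simpa using this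
    have ha2 : a = -2*r := by linarith
    rw [hb', ha2] at hre
    nlinarith [hre, hr0, hβ2, mul_pos (mul_pos hr0 hr0) hr0]
  have hare : a < 0 ∧ -r - a < 0 := by
    rcases mul_eq_zero.mp him' with hb0 | hra
    · rw [hb0] at hre
      constructor
      · by_contra hc
        push_neg at hc
        nlinarith [hre, hr0, hβ2, mul_nonneg hr0.le hc]
      · by_contra hc
        push_neg at hc
        nlinarith [hre, hr0, hβ2, mul_nonneg hr0.le hc]
    · have hav : a = -r/2 := by linarith
      constructor <;> rw [hav] <;> linarith
  refine ⟨r, hr0, hrmem, ?_, hcard, ?_⟩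
  · rw [hroots, Multiset.count_cons_self,
      Multiset.count_cons_of_ne (Ne.symm hzne), Multiset.count_singleton,
      if_neg (Ne.symm hwne)]
  · intro u hu hune
    rw [hroots] at hu
    simp only [Multiset.mem_cons, Multiset.mem_singleton] at hu
    rcases hu with h | h | h
    · exact absurd h hune
    · rw [h]; exact hare.1
    · rw [h, hwre]; exact hare.2
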